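/- Let n ≥ 1, let g_1,...,g_n : I → ℝ be twice continuously differentiable on a compact interval I, let θ be an interior point of I with Σ_{i=1}^n g_i'(θ)² > 0, and fix ε_1,...,ε_n ∈ ℝ. For σ > 0 let θ̂(σ) be a minimizer over u ∈ I of Σ_{i=1}^n (g_i(θ) + σ·ε_i − g_i(u))², and assume θ̂(σ) → θ as σ → 0. Then lim_{σ→0} (θ̂(σ) − θ)/σ = (Σ_{i=1}^n ε_i·g_i'(θ)) / (Σ_{i=1}^n g_i'(θ)²). -/

import Mathlib

open Filter

/-- Deterministic first-order expansion of the nonlinear least-squares estimator in the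
low-noise limit: `(θ̂(σ) - θ)/σ → (Σ εᵢ gᵢ'(θ)) / (Σ gᵢ'(θ)²)` as `σ → 0⁺`. -/
theorem stmt_12 (n : ℕ) (hn : 1 ≤ n) (a c : ℝ) (hac : a < c)
    (g : Fin n → ℝ → ℝ) (hg : ∀ i, ContDiffOn ℝ 2 (g i) (Set.Icc a c))
    (θ : ℝ) (hθ : θ ∈ Set.Ioo a c)
    (hnd : 0 < ∑ i, (deriv (g i) θ) ^ 2)
    (ε : Fin n → ℝ)
    (θhat : ℝ → ℝ)
    (hmem : ∀ σ : ℝ, 0 < σ → θhat σ ∈ Set.Icc a c)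
    (hmin : ∀ σ : ℝ, 0 < σ → ∀ u ∈ Set.Icc a c,
      ∑ i, (g i θ + σ * ε i - g i (θhat σ)) ^ 2 ≤ ∑ i, (g i θ + σ * ε i - g i u) ^ 2)
    (hconv : Tendsto θhat (nhdsWithin 0 (Set.Ioi 0)) (nhds θ)) :
    Tendsto (fun σ => (θhat σ - θ) / σ) (nhdsWithin 0 (Set.Ioi 0))
      (nhds ((∑ i, ε i * deriv (g i) θ) / (∑ i, (deriv (g i) θ) ^ 2))) := by
  have hIoo_nhds : ∀ x ∈ Set.Ioo a c, Set.Icc a c ∈ nhds x := fun x hx =>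
    mem_nhds_iff.mpr ⟨Set.Ioo a c, Set.Ioo_subset_Icc_self, isOpen_Ioo, hx⟩
  have hI : UniqueDiffOn ℝ (Set.Icc a c) := uniqueDiffOn_Icc hac
  -- g i has derivative deriv (g i) x at every interior point
  have hdiffg : ∀ i, ∀ x ∈ Set.Ioo a c, HasDerivAt (g i) (deriv (g i) x) x := by
    intro i x hx
    have : DifferentiableAt ℝ (g i) x :=
      ((hg i).differentiableOn (by norm_num)).differentiableAt (hIoo_nhds x hx)
    exact this.hasDerivAt
  -- deriv (g i) is differentiable at θ
  have hderiv_diff : ∀ i, DifferentiableAt ℝ (deriv (g i)) θ := by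
    intro i
    have h1 : ContDiffOn ℝ 1 (derivWithin (g i) (Set.Icc a c)) (Set.Icc a c) :=
      (hg i).derivWithin hI (by norm_num)
    have h2 : DifferentiableAt ℝ (derivWithin (g i) (Set.Icc a c)) θ :=
      (h1.differentiableOn one_ne_zero).differentiableAt (hIoo_nhds θ hθ)
    apply h2.congr_of_eventuallyEq
    filter_upwards [isOpen_Ioo.mem_nhds hθ] with x hx
    exact (derivWithin_of_mem_nhds (hIoo_nhds x hx)).symm
  set S := ∑ i, (deriv (g i) θ) ^ 2 with hS
  set E := ∑ i, ε i * deriv (g i) θ with hE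
  set h : ℝ → ℝ := fun u => ∑ i, (g i θ - g i u) * deriv (g i) u with hhdef
  have hh0 : h θ = 0 := by simp [hhdef]
  -- h has derivative -S at θ
  have hhderiv : HasDerivAt h (-S) θ := by
    have H : HasDerivAt h
        (∑ i, ((0 - deriv (g i) θ) * deriv (g i) θ
          + (g i θ - g i θ) * deriv (deriv (g i)) θ)) θ := by
      apply HasDerivAt.fun_sum
      intro i _
      exact ((hasDerivAt_const θ (g i θ)).sub (hdiffg i θ hθ)).mul
        (hderiv_diff i).hasDerivAt
    convert H using 1
    simp [hS, Finset.sum_neg_distrib, sq]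
  -- the slope function
  set φ : ℝ → ℝ := fun u => if u = θ then -S else h u / (u - θ) with hφdef
  have hφtendsto : Tendsto φ (nhds θ) (nhds (-S)) := by
    have hslope : Tendsto (slope h θ) (nhdsWithin θ {θ}ᶜ) (nhds (-S)) :=
      hasDerivAt_iff_tendsto_slope.mp hhderiv
    have h1 : Tendsto φ (nhdsWithin θ {θ}ᶜ) (nhds (-S)) := by
      apply hslope.congr'
      filter_upwards [self_mem_nhdsWithin] with u hu
      have hu' : u ≠ θ := hu
      simp only [hφdef, if_neg hu', slope_def_field, hh0, sub_zero]
    have h2 : Tendsto φ (pure θ) (nhds (-S)) := by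
      have : φ θ = -S := by simp [hφdef]
      rw [← this]
      exact tendsto_pure_nhds φ θ
    have := h1.sup h2
    rwa [nhdsNE_sup_pure] at this
  -- First-order condition
  have hFOC : ∀ᶠ σ in nhdsWithin (0:ℝ) (Set.Ioi 0),
      h (θhat σ) = -(σ * ∑ i, ε i * deriv (g i) (θhat σ)) := by
    filter_upwards [self_mem_nhdsWithin,
      hconv.eventually (isOpen_Ioo.mem_nhds hθ)] with σ hσ hσ2
    have hσ' : (0:ℝ) < σ := hσ
    set u := θhat σ with hu
    have hloc : IsLocalMin (fun v => ∑ i, (g i θ + σ * ε i - g i v) ^ 2) u := by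
      filter_upwards [hIoo_nhds u hσ2] with v hv
      exact hmin σ hσ' v hv
    have hF : HasDerivAt (fun v => ∑ i, (g i θ + σ * ε i - g i v) ^ 2)
        (∑ i, (2:ℝ) * (g i θ + σ * ε i - g i u) ^ 1 * (0 - deriv (g i) u)) u := by
      apply HasDerivAt.fun_sum
      intro i _
      exact ((hasDerivAt_const u (g i θ + σ * ε i)).sub (hdiffg i u hσ2)).pow 2
    have hzero : (∑ i, (2:ℝ) * (g i θ + σ * ε i - g i u) ^ 1 * (0 - deriv (g i) u)) = 0 := by
      rw [← hF.deriv]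
      exact hloc.deriv_eq_zero
    have hsum : (∑ i, (g i θ + σ * ε i - g i u) * deriv (g i) u) = 0 := by
      have : (∑ i, (2:ℝ) * (g i θ + σ * ε i - g i u) ^ 1 * (0 - deriv (g i) u))
          = -2 * ∑ i, (g i θ + σ * ε i - g i u) * deriv (g i) u := by
        rw [Finset.mul_sum]
        apply Finset.sum_congr rfl
        intro i _
        ring
      rw [this] at hzero
      linarith
    have : h u = (∑ i, (g i θ + σ * ε i - g i u) * deriv (g i) u)
        - σ * ∑ i, ε i * deriv (g i) (θhat σ) := by
      simp only [hhdef, Finset.mul_sum, ← Finset.sum_sub_distrib]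
      apply Finset.sum_congr rfl
      intro i _
      rw [← hu]
      ring
    rw [this, hsum]
    ring
  -- limits of the pieces
  have hcontE : ContinuousAt (fun v => ∑ i, ε i * deriv (g i) v) θ := by
    apply tendsto_finset_sum
    intro i _
    exact (continuousAt_const.mul (hderiv_diff i).continuousAt : ContinuousAt _ θ)
  have hEσ : Tendsto (fun σ => ∑ i, ε i * deriv (g i) (θhat σ))
      (nhdsWithin (0:ℝ) (Set.Ioi 0)) (nhds E) := hcontE.tendsto.comp hconv
  have hq : Tendsto (fun σ => φ (θhat σ)) (nhdsWithin (0:ℝ) (Set.Ioi 0)) (nhds (-S)) :=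
    hφtendsto.comp hconv
  have hSne : S ≠ 0 := ne_of_gt hnd
  have hmain : Tendsto (fun σ => (∑ i, ε i * deriv (g i) (θhat σ)) / (- φ (θhat σ)))
      (nhdsWithin (0:ℝ) (Set.Ioi 0)) (nhds (E / S)) := by
    have hSne' : -(-S) ≠ 0 := by simpa using hSne
    have := hEσ.div hq.neg hSne'
    rwa [neg_neg] at this
  apply hmain.congr'
  filter_upwards [self_mem_nhdsWithin, hFOC, hq.eventually_ne (neg_ne_zero.mpr hSne)]
    with σ hσ hfoc hφne
  have hσ' : (0:ℝ) < σ := hσ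
  by_cases hcase : θhat σ = θ
  · have h0 : (0:ℝ) = -(σ * ∑ i, ε i * deriv (g i) (θhat σ)) := by
      rw [← hh0, ← hcase]; exact hfoc
    have hEz : (∑ i, ε i * deriv (g i) (θhat σ)) = 0 := by
      rcases mul_eq_zero.mp (neg_eq_zero.mp h0.symm) with h1 | h1
      · exact absurd h1 (ne_of_gt hσ')
      · exact h1
    rw [hcase] at hEz ⊢
    simp [hEz]
  · have hφeq : φ (θhat σ) = h (θhat σ) / (θhat σ - θ) := by
      simp [hφdef, hcase]
    have hne : θhat σ - θ ≠ 0 := sub_ne_zero.mpr hcase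
    have hhne : h (θhat σ) ≠ 0 := by
      intro hz
      apply hφne
      rw [hφeq, hz, zero_div]
    have hXne : (∑ i, ε i * deriv (g i) (θhat σ)) ≠ 0 := by
      intro hz
      apply hhne
      rw [hfoc, hz, mul_zero, neg_zero]
    rw [hφeq, hfoc]
    field_simp
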